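/- Let T be a k-tensor on ℝ^n, let H_1,…,H_k be n×n real matrices, let V be an n×n orthogonal matrix, and let σ be a permutation of {1,…,k}. Setting H̃_i = Vᵀ H_i V for i = 1,…,k, the following identity holds: ⟨T, H̃_1 ∘_σ ⋯ ∘_σ H̃_k⟩ = ( V (Diag^σ T) Vᵀ )[H_1,…,H_k]. -/

import Mathlib

open Matrix

noncomputable section

/-- The space of `n × n` real matrices. -/
abbrev Mat (n : ℕ) := Matrix (Fin n) (Fin n) ℝ

/-- A `k`-tensor on `ℝ^n`: a real number for every multi-index. -/
abbrev Tens (k n : ℕ) := (Fin k → Fin n) → ℝ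

/-- A `2k`-tensor on `ℝ^n`, with the indices grouped into `k` upper and `k` lower ones. -/
abbrev Tens2 (k n : ℕ) := (Fin k → Fin n) → (Fin k → Fin n) → ℝ

/-- Dot product of two `k`-tensors. -/
def tdot {k n : ℕ} (T₁ T₂ : Tens k n) : ℝ := ∑ i : Fin k → Fin n, T₁ i * T₂ i

/-- The `σ`-Hadamard product of `k` matrices:
`(H_1 ∘_σ ⋯ ∘_σ H_k)^{i_1…i_k} = H_1^{i_1 i_{σ⁻¹(1)}} ⋯ H_k^{i_k i_{σ⁻¹(k)}}`. -/
def hadS {k n : ℕ} (σ : Equiv.Perm (Fin k)) (H : Fin k → Mat n) : Tens k n :=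
  fun i => ∏ s : Fin k, H s (i s) (i (σ⁻¹ s))

/-- `Diag^σ T`, the `2k`-tensor equal to `T^{i_1…i_k}` when `i_s = j_{σ(s)}` for all `s`
and `0` otherwise. -/
def DiagS {k n : ℕ} (σ : Equiv.Perm (Fin k)) (T : Tens k n) : Tens2 k n :=
  fun i j => if ∀ s : Fin k, i s = j (σ s) then T i else 0

/-- Action of a `2k`-tensor on `k` matrices:
`S[H_1,…,H_k] = Σ S^{p_1…p_k}_{q_1…q_k} H_1^{p_1q_1} ⋯ H_k^{p_kq_k}`. -/
def app2 {k n : ℕ} (S : Tens2 k n) (H : Fin k → Mat n) : ℝ :=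
  ∑ p : Fin k → Fin n, ∑ q : Fin k → Fin n, S p q * ∏ s : Fin k, H s (p s) (q s)

/-- Conjugation of a `2k`-tensor by an orthogonal matrix:
`(V S Vᵀ)^{i_1…i_k j_1…j_k} = Σ S^{p…}_{q…} V^{i_1p_1}⋯V^{i_kp_k} V^{j_1q_1}⋯V^{j_kq_k}`. -/
def conj2 {k n : ℕ} (V : Mat n) (S : Tens2 k n) : Tens2 k n :=
  fun i j => ∑ p : Fin k → Fin n, ∑ q : Fin k → Fin n,
    S p q * (∏ s : Fin k, V (i s) (p s)) * ∏ s : Fin k, V (j s) (q s)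

lemma prod_sum_sum {k n : ℕ} (f : Fin k → Fin n → Fin n → ℝ) :
    ∏ s : Fin k, ∑ a : Fin n, ∑ b : Fin n, f s a b
      = ∑ p : Fin k → Fin n, ∑ q : Fin k → Fin n, ∏ s : Fin k, f s (p s) (q s) := by
  have h1 : ∀ s : Fin k, (∑ a : Fin n, ∑ b : Fin n, f s a b)
      = ∑ ab : Fin n × Fin n, f s ab.1 ab.2 := by
    intro s; rw [Fintype.sum_prod_type]
  simp_rw [h1]
  rw [Finset.prod_univ_sum]
  simp_rw [Fintype.piFinset_univ]
  have h2 : (∑ pq : (Fin k → Fin n) × (Fin k → Fin n), ∏ s : Fin k, f s (pq.1 s) (pq.2 s))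
      = ∑ p : Fin k → Fin n, ∑ q : Fin k → Fin n, ∏ s : Fin k, f s (p s) (q s) := by
    rw [Fintype.sum_prod_type]
  rw [← h2]
  exact Fintype.sum_equiv (Equiv.arrowProdEquivProdArrow (Fin k) (fun _ => Fin n) (fun _ => Fin n))
    _ (fun pq => ∏ s : Fin k, f s (pq.1 s) (pq.2 s)) (fun g => rfl)

lemma sum_rot {α β γ : Type*} [Fintype α] [Fintype β] [Fintype γ] (f : α → β → γ → ℝ) :
    ∑ p : α, ∑ q : β, ∑ i : γ, f p q i = ∑ i : γ, ∑ p : α, ∑ q : β, f p q i := by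
  rw [show (∑ p : α, ∑ q : β, ∑ i : γ, f p q i) = ∑ p : α, ∑ i : γ, ∑ q : β, f p q i from
    Finset.sum_congr rfl fun p _ => Finset.sum_comm]
  exact Finset.sum_comm

/-- `⟨T, H̃_1 ∘_σ ⋯ ∘_σ H̃_k⟩ = (V (Diag^σ T) Vᵀ)[H_1,…,H_k]` for orthogonal `V`,
where `H̃_i = Vᵀ H_i V`. -/
theorem statement3 {k n : ℕ} (T : Tens k n) (H : Fin k → Mat n)
    (V : Mat n) (hV1 : Vᵀ * V = 1) (hV2 : V * Vᵀ = 1)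
    (σ : Equiv.Perm (Fin k)) :
    tdot T (hadS σ (fun s => Vᵀ * H s * V)) = app2 (conj2 V (DiagS σ T)) H := by
  have hentry : ∀ (s : Fin k) (x y : Fin n),
      (Vᵀ * H s * V) x y = ∑ a, ∑ b, V a x * H s a b * V b y := by
    intro s x y
    simp only [Matrix.mul_apply, Matrix.transpose_apply, Finset.sum_mul]
    rw [Finset.sum_comm]
  have hcond : ∀ (i j : Fin k → Fin n), (∀ s, i s = j (σ s)) ↔ j = fun t => i (σ⁻¹ t) := by
    intro i j
    constructor
    · intro h; funext t
      have := h (σ⁻¹ t); simpa using this.symm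
    · intro h s; subst h; simp
  unfold tdot hadS app2 conj2 DiagS
  simp_rw [hentry, prod_sum_sum, hcond, ite_mul, zero_mul,
    Finset.sum_ite_eq' Finset.univ, Finset.mem_univ, if_true]
  simp only [Finset.prod_mul_distrib, Finset.mul_sum, Finset.sum_mul]
  conv_rhs => rw [sum_rot]
  exact Finset.sum_congr rfl fun i _ => Finset.sum_congr rfl fun p _ =>
    Finset.sum_congr rfl fun q _ => by ring
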